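/- Let (T,F) be a graph-labelled tree whose accessibility graph G is connected. Then every label graph G_v ∈ F is isomorphic to an induced subgraph of G. -/

import Mathlib

open SimpleGraph

variable {V : Type}

/-- A vertex of a tree is a leaf if it has exactly one neighbour. -/
def IsLeaf (T : SimpleGraph V) (v : V) : Prop := ∃! w, T.Adj v w

/-- Admissibility of a walk in a graph-labelled tree: at every internal vertex of the
walk, the marker vertices corresponding to the two consecutive tree-edges are adjacent
in the label graph. -/
inductive Admissible (T : SimpleGraph V) (F : ∀ v : V, SimpleGraph (T.neighborSet v)) :
    ∀ {a b : V}, T.Walk a b → Prop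
  | nil {a : V} : Admissible T F (SimpleGraph.Walk.nil : T.Walk a a)
  | single {a b : V} (h : T.Adj a b) :
      Admissible T F (SimpleGraph.Walk.cons h SimpleGraph.Walk.nil)
  | cons {a v b c : V} (h1 : T.Adj a v) (h2 : T.Adj v b) (p : T.Walk b c)
      (hadj : (F v).Adj ⟨a, h1.symm⟩ ⟨b, h2⟩)
      (hp : Admissible T F (SimpleGraph.Walk.cons h2 p)) :
      Admissible T F (SimpleGraph.Walk.cons h1 (SimpleGraph.Walk.cons h2 p))

/-- `b` is accessible from `a`: the (unique) path joining them is admissible. -/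
def Accessible (T : SimpleGraph V) (F : ∀ v : V, SimpleGraph (T.neighborSet v))
    (a b : V) : Prop :=
  ∃ p : T.Walk a b, p.IsPath ∧ Admissible T F p

/-- The accessibility graph of a graph-labelled tree: vertices are the leaves of the
tree, two leaves being adjacent iff one is accessible from the other. -/
def accGraph (T : SimpleGraph V) (F : ∀ v : V, SimpleGraph (T.neighborSet v)) :
    SimpleGraph {v : V // IsLeaf T v} :=
  SimpleGraph.fromRel (fun x y => Accessible T F ↑x ↑y)

namespace Stmt3Aux

variable {T : SimpleGraph V} {F : ∀ v : V, SimpleGraph (T.neighborSet v)}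

/-- The local admissibility relation on consecutive darts of a walk. -/
def DRel (T : SimpleGraph V) (F : ∀ v : V, SimpleGraph (T.neighborSet v))
    (d d' : T.Dart) : Prop :=
  ∃ h : d'.fst = d.snd, (F d.snd).Adj ⟨d.fst, d.adj.symm⟩ ⟨d'.snd, h ▸ d'.adj⟩

lemma DRel.symm2 {d d' : T.Dart} (h : DRel T F d d') : DRel T F d'.symm d.symm := by
  obtain ⟨⟨a, b⟩, hab⟩ := d
  obtain ⟨⟨c, e⟩, hce⟩ := d'
  obtain ⟨h1, h2⟩ := h
  have h1' : c = b := h1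
  subst h1'
  exact ⟨rfl, h2.symm⟩

lemma admissible_iff {a b : V} (p : T.Walk a b) :
    Admissible T F p ↔ List.IsChain (DRel T F) p.darts := by
  induction p with
  | nil => simp only [Walk.darts_nil, List.isChain_nil, iff_true]; exact Admissible.nil
  | @cons a v b h q ih =>
    cases q with
    | nil =>
      simp only [Walk.darts_cons, Walk.darts_nil, List.isChain_singleton, iff_true]
      exact Admissible.single h
    | @cons v b c h2 r =>
      constructor
      · intro hadm
        cases hadm with
        | cons h1 h2 p hadj hp =>
          simp only [Walk.darts_cons, List.isChain_cons_cons]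
          refine ⟨⟨rfl, hadj⟩, ?_⟩
          simpa [Walk.darts_cons] using ih.mp hp
      · intro hc
        simp only [Walk.darts_cons, List.isChain_cons_cons] at hc
        obtain ⟨⟨_, hadj⟩, hc2⟩ := hc
        exact Admissible.cons h h2 r hadj (ih.mpr (by simpa [Walk.darts_cons] using hc2))

lemma chain_reverse {a b : V} {p : T.Walk a b} (h : List.IsChain (DRel T F) p.darts) :
    List.IsChain (DRel T F) p.reverse.darts := by
  rw [Walk.darts_reverse, List.isChain_reverse, List.isChain_map]
  exact List.IsChain.imp (fun a b hab => hab.symm2) h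

lemma last_dart_reverse {v u a : V} (h1 : T.Adj v u) (t : T.Walk u a) :
    (Walk.cons h1 t).reverse.darts.getLast? = some (SimpleGraph.Dart.mk (u, v) h1.symm) := by
  rw [Walk.darts_reverse, List.getLast?_reverse, Walk.darts_cons, List.head?_map]
  rfl

lemma glue_chain {v u u' a b : V} (h1 : T.Adj v u) (h2 : T.Adj v u')
    (t : T.Walk u a) (s : T.Walk u' b)
    (hc1 : List.IsChain (DRel T F) (Walk.cons h1 t).darts)
    (hc2 : List.IsChain (DRel T F) (Walk.cons h2 s).darts)
    (hadj : (F v).Adj ⟨u, h1⟩ ⟨u', h2⟩) :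
    List.IsChain (DRel T F) ((Walk.cons h1 t).reverse.append (Walk.cons h2 s)).darts := by
  rw [Walk.darts_append, List.isChain_append]
  refine ⟨chain_reverse hc1, hc2, ?_⟩
  intro x hx y hy
  rw [last_dart_reverse h1 t, Option.mem_some_iff] at hx
  rw [Walk.darts_cons, List.head?_cons, Option.mem_some_iff] at hy
  subst hx; subst hy
  exact ⟨rfl, hadj⟩

lemma unglue_chain {v u u' a b : V} (h1 : T.Adj v u) (h2 : T.Adj v u')
    (t : T.Walk u a) (s : T.Walk u' b)
    (hc : List.IsChain (DRel T F) ((Walk.cons h1 t).reverse.append (Walk.cons h2 s)).darts) :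
    (F v).Adj ⟨u, h1⟩ ⟨u', h2⟩ := by
  rw [Walk.darts_append, List.isChain_append] at hc
  have := hc.2.2 (SimpleGraph.Dart.mk (u, v) h1.symm)
    (by rw [last_dart_reverse h1 t]; rfl)
    (SimpleGraph.Dart.mk (v, u') h2)
    (by rw [Walk.darts_cons, List.head?_cons]; rfl)
  obtain ⟨h, hadj⟩ := this
  exact hadj

lemma getVert_one_takeUntil [DecidableEq V] {u w x : V} (p : T.Walk u w) (hx : x ∈ p.support)
    (hne : x ≠ u) : (p.takeUntil x hx).getVert 1 = p.getVert 1 := by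
  cases p with
  | nil => simp at hx; exact absurd hx hne
  | cons h q =>
    rw [Walk.takeUntil]
    split
    · rename_i hux; exact absurd hux.symm hne
    · simp [Walk.getVert_cons_succ, Walk.getVert_zero]

lemma eq_cons_of_getVert_one {v u l : V} (p : T.Walk v l) (h1 : p.getVert 1 = u)
    (hne : u ≠ v) : ∃ (h : T.Adj v u) (t : T.Walk u l), p = Walk.cons h t := by
  cases p with
  | nil => simp [Walk.getVert] at h1; exact absurd h1.symm hne
  | cons h q =>
    rw [Walk.getVert_cons_succ, Walk.getVert_zero] at h1
    subst h1
    exact ⟨h, q, rfl⟩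

/-- Two paths out of `v` in a tree with distinct second vertices meet only at `v`. -/
lemma disj (hT : T.IsTree) {v a b : V} {p : T.Walk v a} {q : T.Walk v b}
    (hp : p.IsPath) (hq : q.IsPath) (hne : p.getVert 1 ≠ q.getVert 1) :
    ∀ w, w ∈ p.support → w ∈ q.support → w = v := by
  classical
  intro w hwp hwq
  by_contra hw
  have h1 := (hT.existsUnique_path v w).unique (hp.takeUntil hwp) (hq.takeUntil hwq)
  have h2 : (p.takeUntil w hwp).getVert 1 = (q.takeUntil w hwq).getVert 1 := by rw [h1]
  rw [getVert_one_takeUntil p hwp hw, getVert_one_takeUntil q hwq hw] at h2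
  exact hne h2

lemma glue_isPath (hT : T.IsTree) {v a b : V} {p : T.Walk v a} {q : T.Walk v b}
    (hp : p.IsPath) (hq : q.IsPath) (hne : p.getVert 1 ≠ q.getVert 1) :
    (p.reverse.append q).IsPath := by
  rw [Walk.isPath_def, Walk.support_append]
  refine List.Nodup.append ?_ ?_ ?_
  · rw [Walk.support_reverse]; exact List.nodup_reverse.mpr hp.support_nodup
  · exact hq.support_nodup.tail
  · intro x hx hx'
    have hxp : x ∈ p.support := by rwa [Walk.support_reverse, List.mem_reverse] at hx
    have hxq : x ∈ q.support := List.mem_of_mem_tail hx'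
    have hxv := disj hT hp hq hne x hxp hxq
    rw [hxv] at hx'
    have hnd := hq.support_nodup
    rw [q.support_eq_cons] at hnd
    exact (List.nodup_cons.mp hnd).1 hx'

lemma getVert_one_concat {v l w : V} (p : T.Walk v l) (h : T.Adj l w) (hlen : 1 ≤ p.length) :
    (p.concat h).getVert 1 = p.getVert 1 := by
  cases p with
  | nil => simp at hlen
  | cons h' q => rw [Walk.concat_cons]; simp [Walk.getVert_cons_succ, Walk.getVert_zero]

lemma extend_path (hT : T.IsTree) {v l : V} (p : T.Walk v l) (hp : p.IsPath)
    (hlen : 1 ≤ p.length) (hnl : ¬ IsLeaf T l) :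
    ∃ (l' : V) (p' : T.Walk v l'), p'.IsPath ∧ p'.getVert 1 = p.getVert 1 ∧
      p'.length = p.length + 1 := by
  classical
  set w0 := p.reverse.getVert 1 with hw0
  have hadj0 : T.Adj l w0 := by
    have hlt : 0 < p.reverse.length := by rw [Walk.length_reverse]; omega
    have := p.reverse.adj_getVert_succ hlt
    simpa [Walk.getVert_zero, w0] using this
  have hex : ∃ w', T.Adj l w' ∧ w' ≠ w0 := by
    by_contra hcon
    push_neg at hcon
    exact hnl ⟨w0, hadj0, hcon⟩
  obtain ⟨w', hadj', hne'⟩ := hex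
  have hwl : w' ≠ l := fun hh => T.irrefl (hh ▸ hadj')
  have hw' : w' ∉ p.support := by
    intro hmem
    have hmemr : w' ∈ p.reverse.support := by
      rwa [Walk.support_reverse, List.mem_reverse]
    have huniq := (hT.existsUnique_path l w').unique
      (Walk.IsPath.nil.cons (by simpa using hwl.symm) : (Walk.cons hadj' .nil).IsPath)
      (hp.reverse.takeUntil hmemr)
    have h2 : (Walk.cons hadj' (.nil)).getVert 1 = (p.reverse.takeUntil w' hmemr).getVert 1 := by
      rw [huniq]
    rw [getVert_one_takeUntil p.reverse hmemr hwl] at h2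
    simp [Walk.getVert_cons_succ, Walk.getVert_zero] at h2
    exact hne' (by simpa [w0] using h2)
  refine ⟨w', p.concat hadj', ?_, getVert_one_concat p hadj' hlen, Walk.length_concat p hadj'⟩
  rw [← Walk.isPath_reverse_iff, Walk.reverse_concat]
  exact hp.reverse.cons (by rwa [Walk.support_reverse, List.mem_reverse])

lemma exists_leaf_aux [Fintype V] (hT : T.IsTree) :
    ∀ (n : ℕ) {v u l : V} (p : T.Walk v l), p.IsPath → p.getVert 1 = u → 1 ≤ p.length →
      Fintype.card V - p.length ≤ n →
      ∃ l', IsLeaf T l' ∧ ∃ q : T.Walk v l', q.IsPath ∧ q.getVert 1 = u := by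
  intro n
  induction n with
  | zero =>
    intro v u l p hp hg hl hn
    have := hp.length_lt
    omega
  | succ n ih =>
    intro v u l p hp hg hl hn
    by_cases hleaf : IsLeaf T l
    · exact ⟨l, hleaf, p, hp, hg⟩
    · obtain ⟨l', p', hp', hg', hlen'⟩ := extend_path hT p hp hl hleaf
      have hlt := hp'.length_lt
      exact ih p' hp' (hg'.trans hg) (by omega) (by omega)

lemma exists_leaf_beyond [Fintype V] (hT : T.IsTree) {v u : V} (h : T.Adj v u) :
    ∃ l, IsLeaf T l ∧ ∃ q : T.Walk v l, q.IsPath ∧ q.getVert 1 = u := by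
  refine exists_leaf_aux hT (Fintype.card V) (Walk.cons h Walk.nil)
    (Walk.IsPath.nil.cons (by simpa using h.ne)) ?_ ?_ ?_
  · simp [Walk.getVert_cons_succ, Walk.getVert_zero]
  · simp
  · omega

lemma cross {W : Type} {G : SimpleGraph W} {P : W → Prop} :
    ∀ {a b : W} (w : G.Walk a b), ¬ P a → P b → ∃ x y, G.Adj x y ∧ ¬ P x ∧ P y := by
  intro a b w
  induction w with
  | nil => intro h1 h2; exact absurd h2 h1
  | @cons a c b h p ih =>
    intro h1 h2
    by_cases hz : P c
    · exact ⟨a, c, h, h1, hz⟩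
    · exact ih hz h2

lemma exists_adm [Fintype V] (hT : T.IsTree)
    (hconn : (accGraph T F).Connected) {v u : V} (h : T.Adj v u) :
    ∃ l, IsLeaf T l ∧ ∃ p : T.Walk v l, p.IsPath ∧ p.getVert 1 = u ∧
      List.IsChain (DRel T F) p.darts := by
  classical
  obtain ⟨aL, haL, s0, hs0, hg0⟩ := exists_leaf_beyond hT h
  set Reach : V → Prop := fun x => ∃ p : T.Walk v x, p.IsPath ∧ p.getVert 1 = u with hReach
  have hbL : ∃ b, IsLeaf T b ∧ ¬ Reach b := by
    by_cases hvleaf : IsLeaf T v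
    · refine ⟨v, hvleaf, ?_⟩
      rintro ⟨p, hp, hg⟩
      rw [(Walk.isPath_iff_eq_nil (p := p)).mp hp] at hg
      exact h.ne (by simpa [Walk.getVert] using hg)
    · have hex : ∃ u'', T.Adj v u'' ∧ u'' ≠ u := by
        by_contra hcon
        push_neg at hcon
        exact hvleaf ⟨u, h, hcon⟩
      obtain ⟨u'', h'', hne''⟩ := hex
      obtain ⟨bL, hbL, t0, ht0, hgt0⟩ := exists_leaf_beyond hT h''
      refine ⟨bL, hbL, ?_⟩
      rintro ⟨p, hp, hg⟩
      have := (hT.existsUnique_path v bL).unique hp ht0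
      rw [this, hgt0] at hg
      exact hne'' hg
  obtain ⟨bL, hbLl, hnb⟩ := hbL
  have hreach := hconn.preconnected ⟨bL, hbLl⟩ ⟨aL, haL⟩
  obtain ⟨w⟩ := hreach
  obtain ⟨x, y, hadjxy, hnx, hy⟩ :=
    cross (P := fun z : {z : V // IsLeaf T z} => Reach z.1) w hnb ⟨s0, hs0, hg0⟩
  rw [accGraph, SimpleGraph.fromRel_adj] at hadjxy
  obtain ⟨hne_xy, hacc⟩ := hadjxy
  have hq1 : ∃ q1 : T.Walk x.1 y.1, q1.IsPath ∧ List.IsChain (DRel T F) q1.darts := by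
    rcases hacc with hA | hA
    · obtain ⟨q, hqp, hqa⟩ := hA
      exact ⟨q, hqp, (admissible_iff q).mp hqa⟩
    · obtain ⟨q, hqp, hqa⟩ := hA
      exact ⟨q.reverse, hqp.reverse, chain_reverse ((admissible_iff q).mp hqa)⟩
  obtain ⟨q1, hq1p, hq1c⟩ := hq1
  obtain ⟨sy, hsy, hgy⟩ := hy
  obtain ⟨t, ht, -⟩ := hT.existsUnique_path v x.1
  have hgt : t.getVert 1 ≠ u := fun hh => hnx ⟨t, ht, hh⟩
  have hneq : t.getVert 1 ≠ sy.getVert 1 := by rw [hgy]; exact hgt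
  have hrpath := glue_isPath hT ht hsy hneq
  have hq1r := (hT.existsUnique_path x.1 y.1).unique hq1p hrpath
  rw [hq1r] at hq1c
  rw [Walk.darts_append, List.isChain_append] at hq1c
  exact ⟨y.1, y.2, sy, hsy, hgy, hq1c.2.1⟩

end Stmt3Aux

open Stmt3Aux

/-- every label graph of a graph-labelled tree with connected
accessibility graph is isomorphic to an induced subgraph of the accessibility graph. -/
theorem stmt3 [Fintype V] (T : SimpleGraph V) (hT : T.IsTree)
    (F : ∀ v : V, SimpleGraph (T.neighborSet v))
    (hconn : (accGraph T F).Connected) (v : V) :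
    Nonempty ((F v) ↪g (accGraph T F)) := by
  classical
  choose l hl p hp hg hc using fun (u : T.neighborSet v) =>
    exists_adm (F := F) hT hconn (u.2 : T.Adj v u)
  -- basic facts
  have hune : ∀ u : T.neighborSet v, (u : V) ≠ v := fun u => (T.ne_of_adj u.2).symm
  have key : ∀ u u' : T.neighborSet v, l u = l u' → (u : V) = u' := by
    intro u u' hlu
    have h1 : ∃ q : T.Walk v (l u), q.IsPath ∧ q.getVert 1 = (u' : V) := by
      rw [hlu]; exact ⟨p u', hp u', hg u'⟩
    obtain ⟨q, hq, hgq⟩ := h1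
    have := (hT.existsUnique_path v (l u)).unique (hp u) hq
    rw [← hg u, this, hgq]
  have hinj : Function.Injective (fun u : T.neighborSet v => (⟨l u, hl u⟩ : {x : V // IsLeaf T x})) := by
    intro u u' hh
    have : l u = l u' := congrArg Subtype.val hh
    exact Subtype.ext (key u u' this)
  refine ⟨⟨⟨fun u => ⟨l u, hl u⟩, hinj⟩, ?_⟩⟩
  intro u u'
  obtain ⟨hu, tu, hpu⟩ := eq_cons_of_getVert_one (p u) (hg u) (hune u)
  obtain ⟨hu', tu', hpu'⟩ := eq_cons_of_getVert_one (p u') (hg u') (hune u')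
  constructor
  · -- accGraph adjacency implies label adjacency
    intro hadj
    rw [accGraph, SimpleGraph.fromRel_adj] at hadj
    obtain ⟨hne_xy, hacc⟩ := hadj
    have hneu : (u : V) ≠ (u' : V) := by
      intro hh
      exact hne_xy (congrArg _ (Subtype.ext (key u u' ((Subtype.ext hh : u = u') ▸ rfl))))
    have hq1 : ∃ q1 : T.Walk (l u) (l u'), q1.IsPath ∧ List.IsChain (DRel T F) q1.darts := by
      rcases hacc with hA | hA
      · obtain ⟨q, hqp, hqa⟩ := hA
        exact ⟨q, hqp, (admissible_iff q).mp hqa⟩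
      · obtain ⟨q, hqp, hqa⟩ := hA
        exact ⟨q.reverse, hqp.reverse, chain_reverse ((admissible_iff q).mp hqa)⟩
    obtain ⟨q1, hq1p, hq1c⟩ := hq1
    have hneq : (p u).getVert 1 ≠ (p u').getVert 1 := by rw [hg u, hg u']; exact hneu
    have hrpath := glue_isPath hT (hp u) (hp u') hneq
    have hq1r := (hT.existsUnique_path (l u) (l u')).unique hq1p hrpath
    rw [hq1r] at hq1c
    rw [hpu, hpu'] at hq1c
    have := unglue_chain hu hu' tu tu' hq1c
    exact this
  · -- label adjacency implies accGraph adjacency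
    intro hadj
    have hneu : (u : V) ≠ (u' : V) := fun hh => hadj.ne (Subtype.ext hh)
    have hneq : (p u).getVert 1 ≠ (p u').getVert 1 := by rw [hg u, hg u']; exact hneu
    have hrpath := glue_isPath hT (hp u) (hp u') hneq
    have hchain : List.IsChain (DRel T F) ((p u).reverse.append (p u')).darts := by
      rw [hpu, hpu']
      refine glue_chain hu hu' tu tu' ?_ ?_ ?_
      · rw [← hpu]; exact hc u
      · rw [← hpu']; exact hc u'
      · exact hadj
    have hacc : Accessible T F (l u) (l u') :=
      ⟨(p u).reverse.append (p u'), hrpath, (admissible_iff _).mpr hchain⟩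
    rw [accGraph, SimpleGraph.fromRel_adj]
    refine ⟨?_, Or.inl hacc⟩
    intro hh
    exact hneu (key u u' (congrArg Subtype.val hh))
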